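/- Let a, b, c be positive integers with a + b + c = n and gcd(a + b, b + c) = 1. Then the meander graph M(a, b, c | n) has no vertex of degree 0; moreover, the number of vertices of degree 1 in M(a, b, c | n) equals the number of odd integers among a, b, c, n. -/

import Mathlib

/-- Two (1-based) positions `u v` are joined by an arc determined by the
composition `L`: they lie in a common block of `L` and are reflections of each
other across the middle of that block. -/
def blockAdj (L : List ℕ) (u v : ℕ) : Prop :=
  ∃ k < L.length,
    (L.take k).sum < u ∧ u ≤ (L.take (k + 1)).sum ∧
    (L.take k).sum < v ∧ v ≤ (L.take (k + 1)).sum ∧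
    u + v = (L.take k).sum + (L.take (k + 1)).sum + 1 ∧ u ≠ v

/-- The meander graph `M(x | y)` on vertices `{1, …, n}` (represented by
`Fin n`, vertex `i` corresponding to the number `i + 1`): top edges come from
the blocks of `x`, bottom edges from the blocks of `y`. -/
def meander (x y : List ℕ) (n : ℕ) : SimpleGraph (Fin n) where
  Adj i j := blockAdj x ((i : ℕ) + 1) ((j : ℕ) + 1) ∨ blockAdj y ((i : ℕ) + 1) ((j : ℕ) + 1)
  symm := by
    constructor
    rintro i j (⟨k, hk, h1, h2, h3, h4, h5, h6⟩ | ⟨k, hk, h1, h2, h3, h4, h5, h6⟩)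
    · exact Or.inl ⟨k, hk, h3, h4, h1, h2, by omega, by omega⟩
    · exact Or.inr ⟨k, hk, h3, h4, h1, h2, by omega, by omega⟩
  loopless := by
    constructor
    rintro i (⟨k, hk, h1, h2, h3, h4, h5, h6⟩ | ⟨k, hk, h1, h2, h3, h4, h5, h6⟩) <;> omega

/-- A graph on `Fin n` consists of a single path when it is isomorphic to the
path graph on `n` vertices. -/
def IsSinglePath {n : ℕ} (G : SimpleGraph (Fin n)) : Prop :=
  Nonempty (G ≃g SimpleGraph.pathGraph n)

lemma blockAdj_single_iff (n u w : ℕ) :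
    blockAdj [n] u w ↔ (0 < u ∧ u ≤ n ∧ 0 < w ∧ w ≤ n ∧ u + w = n + 1 ∧ u ≠ w) := by
  constructor
  · rintro ⟨k, hk, h⟩
    simp only [List.length_singleton, Nat.lt_one_iff] at hk
    subst hk
    simp at h
    omega
  · intro h
    exact ⟨0, by simp, by simpa using h⟩

lemma blockAdj_three_iff (a b c u w : ℕ) :
    blockAdj [a, b, c] u w ↔
      ((0 < u ∧ u ≤ a ∧ 0 < w ∧ w ≤ a ∧ u + w = a + 1 ∧ u ≠ w) ∨
       (a < u ∧ u ≤ a + b ∧ a < w ∧ w ≤ a + b ∧ u + w = 2*a + b + 1 ∧ u ≠ w) ∨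
       (a + b < u ∧ u ≤ a + b + c ∧ a + b < w ∧ w ≤ a + b + c ∧
         u + w = 2*a + 2*b + c + 1 ∧ u ≠ w)) := by
  constructor
  · rintro ⟨k, hk, h⟩
    simp only [List.length_cons, List.length_nil] at hk
    interval_cases k <;> simp at h <;> omega
  · rintro (h | h | h)
    · exact ⟨0, by simp, by simpa using h⟩
    · exact ⟨1, by simp, by simp; omega⟩
    · exact ⟨2, by simp, by simp; omega⟩

/-- The (1-based) top partner position of `u` in the composition `(a, b, c)`. -/
def mtp (a b c u : ℕ) : ℕ :=
  if u ≤ a then a + 1 - u else if u ≤ a + b then 2*a + b + 1 - u else 2*a + 2*b + c + 1 - u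

lemma ncard_double_eq (N x : ℕ) (h2 : 2 ≤ x) (hN : x ≤ 2 * N) :
    {v : Fin N | 2 * ((v : ℕ) + 1) = x}.ncard = (x + 1) % 2 := by
  rcases Nat.even_or_odd x with ⟨m, hm⟩ | ⟨m, hm⟩
  · have h1 : {v : Fin N | 2 * ((v : ℕ) + 1) = x} = {(⟨m - 1, by omega⟩ : Fin N)} := by
      ext v; simp only [Set.mem_setOf_eq, Set.mem_singleton_iff, Fin.ext_iff]; omega
    rw [h1, Set.ncard_singleton]; omega
  · have h1 : {v : Fin N | 2 * ((v : ℕ) + 1) = x} = ∅ := by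
      ext v; simp only [Set.mem_setOf_eq, Set.mem_empty_iff_false, iff_false]; omega
    rw [h1, Set.ncard_empty]; omega

set_option maxHeartbeats 1000000 in
/-- If `a + b + c = n` with `gcd(a + b, b + c) = 1`, then
the meander graph `M(a, b, c | n)` has no vertex of degree `0`, and its number
of vertices of degree `1` equals the number of odd integers among
`a`, `b`, `c`, `n`. -/
theorem meander_submaximal_parabolic_degree_one_count
    (a b c n : ℕ) (ha : 0 < a) (hb : 0 < b) (hc : 0 < c) (habc : a + b + c = n)
    (hg : Nat.gcd (a + b) (b + c) = 1) :
    (∀ v : Fin n, ((meander [a, b, c] [n] n).neighborSet v).ncard ≠ 0) ∧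
    { v : Fin n | ((meander [a, b, c] [n] n).neighborSet v).ncard = 1 }.ncard =
      [a, b, c, n].countP (fun m => m % 2 == 1) := by
  have hac : a ≠ c := by
    intro h
    rw [← h, Nat.add_comm b a, Nat.gcd_self] at hg
    omega
  subst habc
  -- explicit description of neighbor sets
  have key : ∀ v : Fin (a+b+c), (meander [a, b, c] [a+b+c] (a+b+c)).neighborSet v =
      {v' : Fin (a+b+c) |
        ((v' : ℕ) + 1 = mtp a b c ((v : ℕ) + 1) ∧ mtp a b c ((v : ℕ) + 1) ≠ (v : ℕ) + 1)
        ∨ ((v' : ℕ) + 1 + ((v : ℕ) + 1) = (a+b+c) + 1 ∧ 2 * ((v : ℕ) + 1) ≠ (a+b+c) + 1)} := by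
    intro v
    ext v'
    have hv := v.isLt
    have hv' := v'.isLt
    simp only [SimpleGraph.mem_neighborSet, meander, blockAdj_single_iff, blockAdj_three_iff,
      Set.mem_setOf_eq]
    unfold mtp
    split_ifs <;> omega
  -- the degree of every vertex
  have hcard : ∀ v : Fin (a+b+c), ((meander [a, b, c] [a+b+c] (a+b+c)).neighborSet v).ncard =
      if (mtp a b c ((v:ℕ)+1) = (v:ℕ)+1 ∨ 2 * ((v:ℕ)+1) = (a+b+c)+1) then 1 else 2 := by
    intro v
    have hv := v.isLt
    have hb1 : 1 ≤ mtp a b c ((v : ℕ) + 1) ∧ mtp a b c ((v : ℕ) + 1) ≤ a + b + c := by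
      unfold mtp; split_ifs <;> omega
    have hne : mtp a b c ((v : ℕ) + 1) ≠ a + b + c + 1 - ((v : ℕ) + 1) := by
      unfold mtp; split_ifs <;> omega
    split_ifs with h
    · rcases h with h | h
      · have h1 : (meander [a, b, c] [a+b+c] (a+b+c)).neighborSet v =
            {⟨a + b + c - ((v : ℕ) + 1), by omega⟩} := by
          rw [key]; ext v'; simp only [Set.mem_setOf_eq, Set.mem_singleton_iff, Fin.ext_iff]
          omega
        rw [h1, Set.ncard_singleton]
      · have h1 : (meander [a, b, c] [a+b+c] (a+b+c)).neighborSet v =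
            {⟨mtp a b c ((v : ℕ) + 1) - 1, by omega⟩} := by
          rw [key]; ext v'; simp only [Set.mem_setOf_eq, Set.mem_singleton_iff, Fin.ext_iff]
          omega
        rw [h1, Set.ncard_singleton]
    · push_neg at h
      have h1 : (meander [a, b, c] [a+b+c] (a+b+c)).neighborSet v =
          insert (⟨mtp a b c ((v : ℕ) + 1) - 1, by omega⟩ : Fin (a+b+c))
            {⟨a + b + c - ((v : ℕ) + 1), by omega⟩} := by
        rw [key]; ext v'
        simp only [Set.mem_setOf_eq, Set.mem_insert_iff, Set.mem_singleton_iff, Fin.ext_iff]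
        omega
      rw [h1, Set.ncard_insert_of_notMem (by simp [Fin.ext_iff]; omega) (Set.toFinite _),
        Set.ncard_singleton]
  constructor
  · intro v
    rw [hcard v]
    split_ifs <;> omega
  -- identify the degree-one set
  have hiff : ∀ v : Fin (a+b+c),
      (mtp a b c ((v:ℕ)+1) = (v:ℕ)+1 ∨ 2 * ((v:ℕ)+1) = (a+b+c)+1) ↔
      (2*((v:ℕ)+1) = a+1 ∨ 2*((v:ℕ)+1) = 2*a+b+1 ∨
        2*((v:ℕ)+1) = 2*a+2*b+c+1 ∨ 2*((v:ℕ)+1) = (a+b+c)+1) := by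
    intro v
    have hv := v.isLt
    unfold mtp
    split_ifs <;> omega
  have hset : { v : Fin (a+b+c) |
        ((meander [a, b, c] [a+b+c] (a+b+c)).neighborSet v).ncard = 1 } =
      {v : Fin (a+b+c) | 2*((v:ℕ)+1) = a+1 ∨ 2*((v:ℕ)+1) = 2*a+b+1 ∨
        2*((v:ℕ)+1) = 2*a+2*b+c+1 ∨ 2*((v:ℕ)+1) = (a+b+c)+1} := by
    ext v
    simp only [Set.mem_setOf_eq, hcard v, ← hiff v]
    split_ifs with h <;> simp [h]
  rw [hset, Set.setOf_or, Set.setOf_or, Set.setOf_or]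
  have d1 : Disjoint {v : Fin (a+b+c) | 2*((v:ℕ)+1) = a+1}
      ({v : Fin (a+b+c) | 2*((v:ℕ)+1) = 2*a+b+1} ∪
        ({v : Fin (a+b+c) | 2*((v:ℕ)+1) = 2*a+2*b+c+1} ∪
         {v : Fin (a+b+c) | 2*((v:ℕ)+1) = (a+b+c)+1})) := by
    rw [Set.disjoint_left]
    intro v hv hv'
    simp only [Set.mem_setOf_eq, Set.mem_union] at hv hv'
    omega
  have d2 : Disjoint {v : Fin (a+b+c) | 2*((v:ℕ)+1) = 2*a+b+1}
      ({v : Fin (a+b+c) | 2*((v:ℕ)+1) = 2*a+2*b+c+1} ∪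
       {v : Fin (a+b+c) | 2*((v:ℕ)+1) = (a+b+c)+1}) := by
    rw [Set.disjoint_left]
    intro v hv hv'
    simp only [Set.mem_setOf_eq, Set.mem_union] at hv hv'
    omega
  have d3 : Disjoint {v : Fin (a+b+c) | 2*((v:ℕ)+1) = 2*a+2*b+c+1}
      {v : Fin (a+b+c) | 2*((v:ℕ)+1) = (a+b+c)+1} := by
    rw [Set.disjoint_left]
    intro v hv hv'
    simp only [Set.mem_setOf_eq] at hv hv'
    omega
  rw [Set.ncard_union_eq d1 (Set.toFinite _) (Set.toFinite _),
    Set.ncard_union_eq d2 (Set.toFinite _) (Set.toFinite _),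
    Set.ncard_union_eq d3 (Set.toFinite _) (Set.toFinite _)]
  rw [ncard_double_eq _ _ (by omega) (by omega), ncard_double_eq _ _ (by omega) (by omega),
    ncard_double_eq _ _ (by omega) (by omega), ncard_double_eq _ _ (by omega) (by omega)]
  have hcp : ∀ m : ℕ, (if m % 2 = 1 then 1 else 0) = m % 2 := by
    intro m; rcases Nat.mod_two_eq_zero_or_one m with h | h <;> simp [h]
  simp only [List.countP_cons, List.countP_nil, beq_iff_eq, hcp]
  omega
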